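/- Let X be an infinite chain with X = X^+. If α is a composition of finitely many order-preserving self-maps of X each of whose images has cardinality |X|, then Im(α) has no minimum element. -/

import Mathlib

theorem stmt_10 {X : Type*} [LinearOrder X] [Infinite X]
    (hXp : ∀ x : X, Cardinal.mk ↥(Set.Ici x) < Cardinal.mk X)
    (l : List (X → X)) (hl : l ≠ [])
    (hJ : ∀ f ∈ l, Monotone f ∧ Cardinal.mk ↥(Set.range f) = Cardinal.mk X)
    (α : X → X) (hα : α = l.foldr (· ∘ ·) id) :
    ¬ ∃ m : X, IsLeast (Set.range α) m := by
  have hnomin : ∀ t : X, ∃ x : X, x < t := by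
    intro t
    by_contra h
    push_neg at h
    have huniv : Set.Ici t = Set.univ := Set.eq_univ_of_forall h
    have h2 := hXp t
    rw [huniv, Cardinal.mk_univ] at h2
    exact lt_irrefl _ h2
  have hco : ∀ f ∈ l, ∀ t : X, ∃ y : X, f y < t := by
    intro f hf t
    by_contra h
    push_neg at h
    have hsub : Set.range f ⊆ Set.Ici t := by
      rintro _ ⟨y, rfl⟩; exact h y
    have h1 := (Cardinal.mk_le_mk_of_subset hsub).trans_lt (hXp t)
    rw [(hJ f hf).2] at h1
    exact lt_irrefl _ h1
  have key : ∀ L : List (X → X), (∀ f ∈ L, f ∈ l) →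
      ∀ t : X, ∃ y : X, (L.foldr (· ∘ ·) id) y < t := by
    intro L
    induction L with
    | nil => intro _ t; exact hnomin t
    | cons f L' ih =>
      intro hmem t
      have hf : f ∈ l := hmem f List.mem_cons_self
      obtain ⟨v, hv⟩ := hco f hf t
      obtain ⟨y, hy⟩ := ih (fun g hg => hmem g (List.mem_cons_of_mem f hg)) v
      refine ⟨y, ?_⟩
      have hmono := (hJ f hf).1
      calc (List.foldr (· ∘ ·) id (f :: L')) y
          = f ((List.foldr (· ∘ ·) id L') y) := rfl
        _ ≤ f v := hmono hy.le
        _ < t := hv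
  rintro ⟨m, hm⟩
  obtain ⟨y, hy⟩ := key l (fun _ h => h) m
  rw [← hα] at hy
  exact absurd (hm.2 ⟨y, rfl⟩) (not_le.mpr hy)
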